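/- (Theorem 9, exact recovery in the parametric noiseless case.) Suppose σ = 0 and r_i = 0 for all i (so y_i = x_i'β₀ exactly). Suppose κ̃ > 0 and λ > 0 obeys λ√s < nκ̃. Then any square-root lasso minimizer β̂ satisfies ‖β̂ − β₀‖_{2,n} = 0. Moreover, if κ₁ > 0 and all γ_j > 0, then β̂ = β₀. -/

import Mathlib

open Finset MeasureTheory ProbabilityTheory

namespace SqrtLasso

/-- Empirical average `E_n[h_i] = n⁻¹ ∑ᵢ h i`. -/
noncomputable def En (n : ℕ) (h : Fin n → ℝ) : ℝ := (∑ i, h i) / n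

/-- Euclidean inner product `a'b = ∑ⱼ aⱼ bⱼ`. -/
noncomputable def dot {p : ℕ} (a b : Fin p → ℝ) : ℝ := ∑ j, a j * b j

/-- Prediction norm `‖δ‖_{2,n} = (E_n[(x_i'δ)²])^{1/2}`. -/
noncomputable def predNorm (n : ℕ) {p : ℕ} (x : Fin n → Fin p → ℝ) (δ : Fin p → ℝ) : ℝ :=
  Real.sqrt (En n fun i => (dot (x i) δ) ^ 2)

/-- `ℓ₁` norm of a vector. -/
noncomputable def l1 {p : ℕ} (v : Fin p → ℝ) : ℝ := ∑ j, |v j|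

/-- Restriction `v_S`: equal to `v` on `S` and `0` outside. -/
def restr {p : ℕ} (S : Finset (Fin p)) (v : Fin p → ℝ) : Fin p → ℝ :=
  fun j => if j ∈ S then v j else 0

/-- `Γ v`, i.e. componentwise rescaling by loadings `γ`. -/
noncomputable def scl {p : ℕ} (γ v : Fin p → ℝ) : Fin p → ℝ := fun j => γ j * v j

/-- The support of a vector. -/
noncomputable def supp {p : ℕ} (β : Fin p → ℝ) : Finset (Fin p) := Finset.univ.filter fun j => β j ≠ 0

/-- The least-squares criterion `Q̂(β) = E_n[(y_i - x_i'β)²]`. -/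
noncomputable def Qhat (n : ℕ) {p : ℕ} (x : Fin n → Fin p → ℝ) (y : Fin n → ℝ)
    (β : Fin p → ℝ) : ℝ := En n fun i => (y i - dot (x i) β) ^ 2

/-- The restricted set `Δ_c̄`. -/
def Delta {p : ℕ} (γ : Fin p → ℝ) (T : Finset (Fin p)) (cb : ℝ) : Set (Fin p → ℝ) :=
  {δ | δ ≠ 0 ∧ l1 (scl γ (restr Tᶜ δ)) ≤ cb * l1 (scl γ (restr T δ))}

/-- The restricted eigenvalue `κ_c̄`. -/
noncomputable def kappa (n : ℕ) {p : ℕ} (x : Fin n → Fin p → ℝ) (γ : Fin p → ℝ)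
    (T : Finset (Fin p)) (cb : ℝ) : ℝ :=
  sInf {r | ∃ δ ∈ Delta γ T cb,
    r = Real.sqrt T.card * predNorm n x δ / l1 (scl γ (restr T δ))}

/-- The quantity `κ̃`. -/
noncomputable def kappaTilde (n : ℕ) {p : ℕ} (x : Fin n → Fin p → ℝ) (γ : Fin p → ℝ)
    (T : Finset (Fin p)) : ℝ :=
  sInf {r | ∃ δ : Fin p → ℝ, l1 (scl γ (restr Tᶜ δ)) < l1 (scl γ (restr T δ)) ∧
    r = Real.sqrt T.card * predNorm n x δ /
      (l1 (scl γ (restr T δ)) - l1 (scl γ (restr Tᶜ δ)))}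

/-- The score `S̃ = E_n[x_i(σε_i + r_i)] / √(E_n[(σε_i + r_i)²])`. -/
noncomputable def score (n : ℕ) {p : ℕ} (x : Fin n → Fin p → ℝ) (ε rr : Fin n → ℝ)
    (σ : ℝ) : Fin p → ℝ :=
  fun j => En n (fun i => x i j * (σ * ε i + rr i)) /
    Real.sqrt (En n fun i => (σ * ε i + rr i) ^ 2)

/-- `‖Γ⁻¹ S̃‖_∞ = max_j |S̃_j| / γ_j`. -/
noncomputable def scoreSup (n : ℕ) {p : ℕ} (x : Fin n → Fin p → ℝ) (ε rr : Fin n → ℝ)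
    (σ : ℝ) (γ : Fin p → ℝ) : ℝ :=
  ⨆ j, |score n x ε rr σ j| / γ j

/-- The quantity `ϱ_c̄`. -/
noncomputable def varrho (n : ℕ) {p : ℕ} (x : Fin n → Fin p → ℝ) (γ : Fin p → ℝ)
    (T : Finset (Fin p)) (β₀ : Fin p → ℝ) (S : Fin p → ℝ) (cb : ℝ) : ℝ :=
  sSup {r | ∃ δ ∈ Delta γ T cb, 0 < predNorm n x δ ∧
    l1 (scl γ (δ + β₀)) ≤ cb * l1 (scl γ β₀) ∧ r = |dot S δ| / predNorm n x δ}

/-- Quadratic form `δ'Mδ`. -/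
noncomputable def quadForm {p : ℕ} (M : Fin p → Fin p → ℝ) (δ : Fin p → ℝ) : ℝ :=
  ∑ j, ∑ k, δ j * M j k * δ k

/-- Maximal `m`-sparse eigenvalue `φ_max(m, M)`. -/
noncomputable def phiMax {p : ℕ} (M : Fin p → Fin p → ℝ) (T : Finset (Fin p)) (m : ℕ) : ℝ :=
  sSup {r | ∃ δ : Fin p → ℝ, δ ≠ 0 ∧ (supp δ \ T).card ≤ m ∧
    r = quadForm M δ / ∑ j, (δ j) ^ 2}

/-- Minimal `m`-sparse eigenvalue `φ_min(m, M)`. -/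
noncomputable def phiMin {p : ℕ} (M : Fin p → Fin p → ℝ) (T : Finset (Fin p)) (m : ℕ) : ℝ :=
  sInf {r | ∃ δ : Fin p → ℝ, δ ≠ 0 ∧ (supp δ \ T).card ≤ m ∧
    r = quadForm M δ / ∑ j, (δ j) ^ 2}

/-- Gram matrix `E_n[x_i x_i']`. -/
noncomputable def gram (n : ℕ) {p : ℕ} (x : Fin n → Fin p → ℝ) : Fin p → Fin p → ℝ :=
  fun j k => En n fun i => x i j * x i k

/-- Rescaled Gram matrix `Γ⁻¹ E_n[x_i x_i'] Γ⁻¹`. -/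
noncomputable def rgram (n : ℕ) {p : ℕ} (x : Fin n → Fin p → ℝ) (γ : Fin p → ℝ) :
    Fin p → Fin p → ℝ :=
  fun j k => gram n x j k / (γ j * γ k)


lemma l1_nonneg {p : ℕ} (v : Fin p → ℝ) : 0 ≤ l1 v :=
  Finset.sum_nonneg fun _ _ => abs_nonneg _

lemma key_ineq {p : ℕ} (γ β₀ βh : Fin p → ℝ) (hγ : ∀ j, 0 ≤ γ j) :
    l1 (scl γ β₀) - l1 (scl γ βh) + l1 (scl γ (restr (supp β₀)ᶜ (βh - β₀)))
      ≤ l1 (scl γ (restr (supp β₀) (βh - β₀))) := by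
  unfold l1 scl restr supp
  rw [← Finset.sum_sub_distrib, ← Finset.sum_add_distrib]
  apply Finset.sum_le_sum
  intro j _
  by_cases hj : β₀ j = 0
  · simp [hj, Finset.mem_compl, Finset.mem_filter]
  · have hmem : j ∈ Finset.univ.filter (fun j => β₀ j ≠ 0) := by
      simp [Finset.mem_filter, hj]
    have hmem' : j ∉ (Finset.univ.filter (fun j => β₀ j ≠ 0))ᶜ := by
      simp [Finset.mem_compl, hj]
    rw [if_pos hmem, if_neg hmem']
    have h1 : |γ j * β₀ j| - |γ j * βh j| ≤ |γ j * β₀ j - γ j * βh j| :=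
      abs_sub_abs_le_abs_sub _ _
    have h2 : |γ j * β₀ j - γ j * βh j| = |γ j * (βh - β₀) j| := by
      rw [abs_sub_comm]
      congr 1
      simp [Pi.sub_apply]; ring
    simp only [mul_zero, abs_zero, add_zero]
    linarith [h1, h2.le, h2.ge]

/-- Theorem 9, exact recovery in the parametric noiseless case. -/
theorem statement_12 (n p : ℕ) (hn : 1 ≤ n) (hp : 1 ≤ p)
    (x : Fin n → Fin p → ℝ) (β₀ γ : Fin p → ℝ) (hγ : ∀ j, 1 ≤ γ j)
    (hs : 1 ≤ (supp β₀).card)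
    (y : Fin n → ℝ) (hy : ∀ i, y i = dot (x i) β₀)
    (lam : ℝ) (hlam : 0 < lam)
    (hκ : 0 < kappaTilde n x γ (supp β₀))
    (hgrow : lam * Real.sqrt (supp β₀).card < n * kappaTilde n x γ (supp β₀))
    (βh : Fin p → ℝ)
    (hmin : ∀ β : Fin p → ℝ,
      Real.sqrt (Qhat n x y βh) + lam / n * l1 (scl γ βh) ≤
        Real.sqrt (Qhat n x y β) + lam / n * l1 (scl γ β)) :
    predNorm n x (βh - β₀) = 0 ∧
      (0 < kappa n x γ (supp β₀) 1 → (∀ j, 0 < γ j) → βh = β₀) := by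
  classical
  set T := supp β₀ with hT
  set δ : Fin p → ℝ := βh - β₀ with hδdef
  have hnR : (0:ℝ) < n := by exact_mod_cast hn
  have hsR : (0:ℝ) < Real.sqrt T.card := Real.sqrt_pos.mpr (by exact_mod_cast hs)
  have hP0 : 0 ≤ predNorm n x δ := Real.sqrt_nonneg _
  have hQβh : Qhat n x y βh = En n fun i => (dot (x i) δ) ^ 2 := by
    unfold Qhat En
    congr 1
    apply Finset.sum_congr rfl
    intro i _
    have hdd : dot (x i) δ = dot (x i) βh - dot (x i) β₀ := by
      simp [hδdef, dot, mul_sub, Finset.sum_sub_distrib]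
    show (y i - dot (x i) βh) ^ 2 = dot (x i) δ ^ 2
    rw [hy i, hdd]; ring
  have hQβ0 : Qhat n x y β₀ = 0 := by
    unfold Qhat En
    simp [hy]
  have hsqrt : Real.sqrt (Qhat n x y βh) = predNorm n x δ := by
    rw [hQβh]; rfl
  have hmin0 := hmin β₀
  rw [hsqrt, hQβ0, Real.sqrt_zero, zero_add] at hmin0
  have hkey : l1 (scl γ β₀) - l1 (scl γ βh) + l1 (scl γ (restr Tᶜ δ))
      ≤ l1 (scl γ (restr T δ)) := key_ineq γ β₀ βh (fun j => le_trans zero_le_one (hγ j))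
  have hcnn : 0 ≤ lam / n := div_nonneg hlam.le hnR.le
  have hstep : predNorm n x δ ≤
      lam / n * (l1 (scl γ (restr T δ)) - l1 (scl γ (restr Tᶜ δ))) := by
    have h1 : predNorm n x δ ≤ lam / n * (l1 (scl γ β₀) - l1 (scl γ βh)) := by
      have hms : lam / n * (l1 (scl γ β₀) - l1 (scl γ βh))
          = lam / n * l1 (scl γ β₀) - lam / n * l1 (scl γ βh) := by ring
      linarith [hmin0, hms.ge, hms.le]
    have h2 : lam / n * (l1 (scl γ β₀) - l1 (scl γ βh)) ≤
        lam / n * (l1 (scl γ (restr T δ)) - l1 (scl γ (restr Tᶜ δ))) :=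
      mul_le_mul_of_nonneg_left (by linarith) hcnn
    linarith
  have hbdd1 : BddBelow {r | ∃ δ' : Fin p → ℝ,
      l1 (scl γ (restr Tᶜ δ')) < l1 (scl γ (restr T δ')) ∧
      r = Real.sqrt T.card * predNorm n x δ' /
        (l1 (scl γ (restr T δ')) - l1 (scl γ (restr Tᶜ δ')))} := by
    refine ⟨0, ?_⟩
    rintro r ⟨δ', h1, rfl⟩
    exact div_nonneg (mul_nonneg hsR.le (Real.sqrt_nonneg _)) (by linarith)
  have hPzero : predNorm n x δ = 0 := by
    by_cases hD : l1 (scl γ (restr Tᶜ δ)) < l1 (scl γ (restr T δ))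
    · have hmem : kappaTilde n x γ T ≤ Real.sqrt T.card * predNorm n x δ /
          (l1 (scl γ (restr T δ)) - l1 (scl γ (restr Tᶜ δ))) :=
        csInf_le hbdd1 ⟨δ, hD, rfl⟩
      have hDpos : 0 < l1 (scl γ (restr T δ)) - l1 (scl γ (restr Tᶜ δ)) :=
        sub_pos.mpr hD
      have hkD : kappaTilde n x γ T *
          (l1 (scl γ (restr T δ)) - l1 (scl γ (restr Tᶜ δ))) ≤
          Real.sqrt T.card * predNorm n x δ := (le_div_iff₀ hDpos).mp hmem
      by_contra hne
      have hPpos : 0 < predNorm n x δ := lt_of_le_of_ne hP0 (Ne.symm hne)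
      have c2 := mul_lt_mul_of_pos_right hgrow hPpos
      have c3 : (n:ℝ) * predNorm n x δ ≤
          lam * (l1 (scl γ (restr T δ)) - l1 (scl γ (restr Tᶜ δ))) := by
        have h2 := mul_le_mul_of_nonneg_left hstep hnR.le
        have h3 : (n:ℝ) * (lam / n *
            (l1 (scl γ (restr T δ)) - l1 (scl γ (restr Tᶜ δ)))) =
            lam * (l1 (scl γ (restr T δ)) - l1 (scl γ (restr Tᶜ δ))) := by
          field_simp
        linarith [h2, h3.le, h3.ge]
      nlinarith [mul_le_mul_of_nonneg_left hkD hlam.le,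
        mul_le_mul_of_nonneg_left c3 hκ.le]
    · have hD' : l1 (scl γ (restr T δ)) - l1 (scl γ (restr Tᶜ δ)) ≤ 0 := by
        linarith [not_lt.mp hD]
      have : predNorm n x δ ≤ 0 := le_trans hstep (by nlinarith)
      linarith
  refine ⟨hPzero, ?_⟩
  intro hκ1 hγpos
  by_contra hne
  have hδne : δ ≠ 0 := sub_ne_zero.mpr hne
  have hl1 : l1 (scl γ βh) ≤ l1 (scl γ β₀) := by
    rw [hPzero] at hmin0
    have hcp : 0 < lam / n := div_pos hlam hnR
    have := (mul_le_mul_iff_right₀ hcp).mp (by linarith : lam / n * l1 (scl γ βh) ≤ lam / n * l1 (scl γ β₀))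
    exact this
  have hDel : δ ∈ Delta γ T 1 := ⟨hδne, by rw [one_mul]; linarith⟩
  have hbdd2 : BddBelow {r | ∃ δ' ∈ Delta γ T 1,
      r = Real.sqrt T.card * predNorm n x δ' / l1 (scl γ (restr T δ'))} := by
    refine ⟨0, ?_⟩
    rintro r ⟨δ', _, rfl⟩
    exact div_nonneg (mul_nonneg hsR.le (Real.sqrt_nonneg _)) (l1_nonneg _)
  have hle0 : kappa n x γ T 1 ≤
      Real.sqrt T.card * predNorm n x δ / l1 (scl γ (restr T δ)) :=
    csInf_le hbdd2 ⟨δ, hDel, rfl⟩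
  rw [hPzero, mul_zero, zero_div] at hle0
  linarith

end SqrtLasso
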